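/- Let n ≥ 2 and p_1,...,p_n ∈ ℝ^d in good position, and let Q_n be the circumcenter of p_1,...,p_n. Then the closed segment from p_1 to Q_n is disjoint from the affine span H(p_2,...,p_n). In particular, the points p_2, p_3, ..., p_n, Q_n are in good position. -/

import Mathlib

open EuclideanGeometry Affine

variable {d : ℕ}

noncomputable def distSqSub (a b : EuclideanSpace ℝ (Fin d)) :
    EuclideanSpace ℝ (Fin d) →ᵃ[ℝ] ℝ where
  toFun x := dist x a ^ 2 - dist x b ^ 2
  linear := (2 : ℝ) • ((innerSL ℝ (b - a)).toLinearMap)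
  map_vadd' p v := by
    simp only [vadd_eq_add, LinearMap.smul_apply, ContinuousLinearMap.coe_coe, innerSL_apply_apply,
      smul_eq_mul, dist_eq_norm]
    have h1 : v + p - a = v + (p - a) := by abel
    have h2 : v + p - b = v + (p - b) := by abel
    rw [h1, h2, norm_add_sq_real, norm_add_sq_real]
    have e1 : (inner ℝ (b - a) v : ℝ) = (inner ℝ v (p - a) : ℝ) - (inner ℝ v (p - b) : ℝ) := by
      rw [← inner_sub_right]
      have : (p - a) - (p - b) = b - a := by abel
      rw [this, real_inner_comm]
    ring_nf
    linarith [e1]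

lemma distSqSub_apply (a b x : EuclideanSpace ℝ (Fin d)) :
    distSqSub a b x = dist x a ^ 2 - dist x b ^ 2 := rfl

set_option maxHeartbeats 1000000 in
/-- Key lemma: for a "tower" simplex (each point equidistant from all earlier ones),
any affine functional positive on the first vertex and zero on the others is
positive at the circumcenter. -/
lemma circum_pos : ∀ (m : ℕ) (s : Simplex ℝ (EuclideanSpace ℝ (Fin d)) m)
    (g : EuclideanSpace ℝ (Fin d) →ᵃ[ℝ] ℝ),
    (∀ i j k : Fin (m + 1), j < i → k < i →
      dist (s.points j) (s.points i) = dist (s.points k) (s.points i)) →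
    0 < g (s.points 0) → (∀ i, i ≠ 0 → g (s.points i) = 0) → 0 < g s.circumcenter := by
  intro m
  induction m with
  | zero =>
    intro s g _ h0 _
    rwa [s.circumcenter_eq_point 0]
  | succ m ih =>
    intro s g htower h0 hz
    -- the sub-simplex on the first m+1 points
    set t : Simplex ℝ (EuclideanSpace ℝ (Fin d)) m :=
      ⟨fun i => s.points i.castSucc,
        s.independent.comp_embedding Fin.castSuccEmb⟩ with ht
    have htpts : ∀ i : Fin (m + 1), t.points i = s.points i.castSucc := fun i => rfl
    set plast := s.points (Fin.last (m + 1)) with hplast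
    have hlast_ne : Fin.last (m + 1) ≠ 0 := by
      simp [Fin.ext_iff]
    -- projection of the circumcenter onto the face is the face circumcenter
    have hprojc : ↑(t.orthogonalProjectionSpan s.circumcenter) = t.circumcenter := by
      refine t.orthogonalProjection_eq_circumcenter_of_dist_eq (r := s.circumradius) ?_
      intro i
      exact s.dist_circumcenter_eq_circumradius _
    -- projection of the last point onto the face is the face circumcenter
    have hprojl : ↑(t.orthogonalProjectionSpan plast) = t.circumcenter := by
      refine t.orthogonalProjection_eq_circumcenter_of_dist_eq
        (r := dist (s.points 0) plast) ?_
      intro i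
      exact htower (Fin.last (m + 1)) i.castSucc 0 (Fin.castSucc_lt_last i)
        (Fin.pos_iff_ne_zero.mpr hlast_ne)
    -- the last point is not in the span of the face
    have hlast_notin : plast ∉ affineSpan ℝ (Set.range t.points) := by
      have hsub : Set.range t.points ⊆ s.points '' (Set.univ \ {Fin.last (m + 1)}) := by
        rintro x ⟨i, rfl⟩
        exact ⟨i.castSucc, ⟨Set.mem_univ _, Fin.ne_last_of_lt (Fin.castSucc_lt_last i)⟩, rfl⟩
      intro h
      exact s.independent.notMem_affineSpan_diff (Fin.last (m + 1)) Set.univ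
        ((affineSpan_mono ℝ hsub) h)
    -- decompose the circumcenter
    have hrange : Set.range s.points = insert plast (Set.range t.points) := by
      ext x
      constructor
      · rintro ⟨i, rfl⟩
        rcases Fin.eq_castSucc_or_eq_last i with ⟨j, rfl⟩ | rfl
        · exact Set.mem_insert_of_mem _ ⟨j, rfl⟩
        · exact Set.mem_insert _ _
      · rintro (rfl | ⟨i, rfl⟩)
        · exact ⟨Fin.last (m + 1), rfl⟩
        · exact ⟨i.castSucc, rfl⟩
    have hmem : s.circumcenter ∈
        affineSpan ℝ (insert plast ((affineSpan ℝ (Set.range t.points) : AffineSubspace ℝ _) : Set (EuclideanSpace ℝ (Fin d)))) := by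
      rw [affineSpan_insert_affineSpan, ← hrange]
      exact s.circumcenter_mem_affineSpan
    rw [AffineSubspace.mem_affineSpan_insert_iff
      (EuclideanGeometry.orthogonalProjection_mem plast) plast s.circumcenter] at hmem
    obtain ⟨r, p0, hp0, hcc⟩ := hmem
    change s.circumcenter = r • (plast -ᵥ ↑(t.orthogonalProjectionSpan plast)) +ᵥ p0 at hcc
    -- identify p0 with the face circumcenter
    have hp0eq : p0 = t.circumcenter := by
      have h1 := t.orthogonalProjection_vadd_smul_vsub_orthogonalProjection plast r hp0
      rw [← hcc] at h1
      rw [← hprojc, h1]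
    rw [hp0eq, hprojl] at hcc
    set C := t.circumcenter with hC
    set u : EuclideanSpace ℝ (Fin d) := plast -ᵥ C with hu
    set h := dist plast C with hh
    have hhpos : 0 < h := by
      rw [hh, dist_pos]
      intro hne
      exact hlast_notin (hne ▸ t.circumcenter_mem_affineSpan)
    have hnormu : ‖u‖ = h := by
      rw [hu, hh, dist_eq_norm_vsub (EuclideanSpace ℝ (Fin d))]
    have hρ : 0 ≤ t.circumradius := t.circumradius_nonneg
    -- first distance equation
    have esq1 : s.circumradius ^ 2 = (r - 1) ^ 2 * h ^ 2 := by
      have e0 : dist s.circumcenter plast = s.circumradius := by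
        rw [dist_comm]
        exact s.dist_circumcenter_eq_circumradius _
      have e1 : s.circumcenter -ᵥ plast = (r - 1) • u := by
        rw [hcc, vadd_vsub_assoc, hu,
          show C -ᵥ plast = -(plast -ᵥ C) from (neg_vsub_eq_vsub_rev plast C).symm]
        module
      have : dist s.circumcenter plast = ‖(r - 1) • u‖ := by
        rw [dist_eq_norm_vsub (EuclideanSpace ℝ (Fin d)), e1]
      rw [e0] at this
      rw [this, norm_smul, Real.norm_eq_abs, mul_pow, sq_abs, hnormu]
    -- second distance equation (Pythagoras through the projection)
    have esq2 : s.circumradius ^ 2 = t.circumradius ^ 2 + r ^ 2 * h ^ 2 := by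
      have hmem0 : t.points 0 ∈ affineSpan ℝ (Set.range t.points) :=
        mem_affineSpan ℝ (Set.mem_range_self _)
      have e0 := t.dist_sq_eq_dist_orthogonalProjection_sq_add_dist_orthogonalProjection_sq
        s.circumcenter hmem0
      have e1 : dist (t.points 0) s.circumcenter = s.circumradius := by
        have : t.points 0 = s.points 0 := by
          rw [htpts]
          congr 1
        rw [this, s.dist_circumcenter_eq_circumradius]
      have e2 : dist (t.points 0) ↑(t.orthogonalProjectionSpan s.circumcenter)
          = t.circumradius := by
        rw [hprojc]
        exact t.dist_circumcenter_eq_circumradius 0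
      have e3 : dist s.circumcenter ↑(t.orthogonalProjectionSpan s.circumcenter) = |r| * h := by
        rw [hprojc]
        have : s.circumcenter -ᵥ C = r • u := by
          rw [hcc, vadd_vsub]
        rw [dist_eq_norm_vsub (EuclideanSpace ℝ (Fin d)), this, norm_smul,
          Real.norm_eq_abs, hnormu]
      rw [e1, e2, e3] at e0
      have e4 : |r| * h * (|r| * h) = r ^ 2 * h ^ 2 := by
        rw [mul_mul_mul_comm, ← pow_two, ← pow_two, sq_abs]
      rw [e4] at e0
      rw [pow_two, pow_two]
      linarith [e0]
    have hr2 : r ≤ 1 / 2 := by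
      have e5 : (1 - 2 * r) * h ^ 2 = t.circumradius ^ 2 := by nlinarith [esq1, esq2]
      nlinarith [e5, sq_nonneg t.circumradius, mul_pos hhpos hhpos]
    -- value of g at the circumcenter
    have hgC : 0 < g C := by
      refine ih t g ?_ ?_ ?_
      · intro i j k hj hk
        simp only [htpts]
        exact htower i.castSucc j.castSucc k.castSucc
          (Fin.castSucc_lt_castSucc_iff.mpr hj) (Fin.castSucc_lt_castSucc_iff.mpr hk)
      · have : t.points 0 = s.points 0 := by rw [htpts]; congr 1
        rw [this]
        exact h0
      · intro i hi
        rw [htpts]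
        refine hz i.castSucc ?_
        exact Fin.castSucc_ne_zero_iff.mpr hi
    have hgval : g s.circumcenter = (1 - r) * g C := by
      rw [hcc, AffineMap.map_vadd]
      have hlin : g.linear (r • u) = r * (g plast - g C) := by
        rw [LinearMap.map_smul, hu, AffineMap.linearMap_vsub]
        simp [smul_eq_mul]
      rw [hlin, hz (Fin.last (m + 1)) hlast_ne]
      simp only [vadd_eq_add]
      ring
    rw [hgval]
    nlinarith [hgC, hr2]


/-- `GoodPosition p a n`: the points `p a, ..., p (a+n-1)` of `ℝ^d` are affinely
independent and each point is equidistant from all earlier ones. -/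
def GoodPosition {d : ℕ} (p : ℕ → EuclideanSpace ℝ (Fin d)) (a n : ℕ) : Prop :=
  AffineIndependent ℝ (fun i : Fin n => p (a + i)) ∧
  ∀ i j k : ℕ, i < n → j < i → k < i →
    dist (p (a + j)) (p (a + i)) = dist (p (a + k)) (p (a + i))

/-- `IsCircumcenter Q p a n`: `Q` lies in the affine span of `p a, ..., p (a+n-1)`
and is equidistant from these points. -/
def IsCircumcenter {d : ℕ} (Q : EuclideanSpace ℝ (Fin d))
    (p : ℕ → EuclideanSpace ℝ (Fin d)) (a n : ℕ) : Prop :=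
  Q ∈ affineSpan ℝ (p '' Set.Ico a (a + n)) ∧ ∃ R : ℝ, ∀ i < n, dist Q (p (a + i)) = R

set_option maxHeartbeats 1000000 in
/-- Let `n ≥ 2` and `p_1, ..., p_n ∈ ℝ^d` in good position, and let `Q_n` be their
circumcenter.  Then the closed segment from `p_1` to `Q_n` is disjoint from the affine
span `H(p_2, ..., p_n)`; in particular the points `p_2, ..., p_n, Q_n` are in good
position. -/
theorem segment_disjoint_of_goodPosition (d n : ℕ) (hn : 2 ≤ n)
    (p : ℕ → EuclideanSpace ℝ (Fin d))
    (hgood : GoodPosition p 1 n)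
    (Qn : EuclideanSpace ℝ (Fin d))
    (hQn : IsCircumcenter Qn p 1 n) :
    (∀ x ∈ segment ℝ (p 1) Qn, x ∉ affineSpan ℝ (p '' Set.Icc 2 n)) ∧
    GoodPosition (fun i => if i ≤ n - 1 then p (i + 1) else Qn) 1 n := by
  obtain ⟨k, rfl⟩ : ∃ k, n = k + 2 := ⟨n - 2, by omega⟩
  obtain ⟨hindep, hdist⟩ := hgood
  obtain ⟨-, R, hR⟩ := hQn
  -- the simplex on p 2, ..., p (k+2)
  have hT : AffineIndependent ℝ (fun i : Fin (k + 1) => p (2 + (i : ℕ))) := by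
    have h1 := hindep.comp_embedding (Fin.succEmb (k + 1))
    have he : (fun i : Fin (k + 1) => p (2 + (i : ℕ)))
        = fun i : Fin (k + 1) => p (1 + ((Fin.succEmb (k + 1)) i : ℕ)) := by
      funext i
      show p (2 + (i : ℕ)) = p (1 + ((i : ℕ) + 1))
      rw [show 1 + ((i : ℕ) + 1) = 2 + (i : ℕ) from by omega]
    rw [he]
    exact h1
  set T : Simplex ℝ (EuclideanSpace ℝ (Fin d)) k := ⟨fun i => p (2 + (i : ℕ)), hT⟩ with hTdef
  have hTpts : ∀ i : Fin (k + 1), T.points i = p (2 + (i : ℕ)) := fun i => rfl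
  have hT0 : T.points 0 = p 2 := by rw [hTpts]; norm_num
  have hspanset : p '' Set.Icc 2 (k + 2) = Set.range T.points := by
    ext x
    constructor
    · rintro ⟨m, ⟨h2, hk2⟩, rfl⟩
      refine ⟨⟨m - 2, by omega⟩, ?_⟩
      rw [hTpts]
      show p (2 + (m - 2)) = p m
      rw [show 2 + (m - 2) = m from by omega]
    · rintro ⟨i, rfl⟩
      exact ⟨2 + (i : ℕ), ⟨by omega, by omega⟩, rfl⟩
  have hp12 : p 1 ≠ p 2 := by
    intro h
    have hinj := hindep.injective
    have : ((0 : Fin (k + 2))) = 1 := by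
      apply hinj
      show p (1 + ((0 : Fin (k+2)) : ℕ)) = p (1 + ((1 : Fin (k+2)) : ℕ))
      have h0 : ((0 : Fin (k + 2)) : ℕ) = 0 := rfl
      have h1 : ((1 : Fin (k + 2)) : ℕ) = 1 := rfl
      rw [h0, h1]
      simpa using h
    simp [Fin.ext_iff] at this
  set g := distSqSub (p 1) (p 2) with hgdef
  have hgpos : 0 < g (T.points 0) := by
    rw [hT0, hgdef, distSqSub_apply]
    simp only [dist_self]
    have : 0 < dist (p 2) (p 1) := dist_pos.mpr (Ne.symm hp12)
    nlinarith
  have hgz : ∀ i : Fin (k + 1), i ≠ 0 → g (T.points i) = 0 := by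
    intro i hi
    have hi1 : 1 ≤ (i : ℕ) := by
      rcases Nat.eq_zero_or_pos (i : ℕ) with h | h
      · exact absurd (Fin.ext h) hi
      · exact h
    have hd := hdist ((i : ℕ) + 1) 0 1 (by omega) (by omega) (by omega)
    rw [hTpts, hgdef, distSqSub_apply, sub_eq_zero]
    rw [show (1 : ℕ) + 0 = 1 from rfl, show (1 : ℕ) + 1 = 2 from rfl,
      show 1 + ((i : ℕ) + 1) = 2 + (i : ℕ) from by omega] at hd
    rw [dist_comm (p (2 + (i:ℕ))) (p 1), dist_comm (p (2 + (i:ℕ))) (p 2), hd]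
  have htowerT : ∀ i j k' : Fin (k + 1), j < i → k' < i →
      dist (T.points j) (T.points i) = dist (T.points k') (T.points i) := by
    intro i j k' hj hk'
    have hd := hdist ((i : ℕ) + 1) ((j : ℕ) + 1) ((k' : ℕ) + 1)
      (by omega) (by exact Nat.add_lt_add_right hj 1) (by exact Nat.add_lt_add_right hk' 1)
    simp only [hTpts]
    rw [show 1 + ((i : ℕ) + 1) = 2 + (i : ℕ) from by omega,
      show 1 + ((j : ℕ) + 1) = 2 + (j : ℕ) from by omega,
      show 1 + ((k' : ℕ) + 1) = 2 + (k' : ℕ) from by omega] at hd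
    exact hd
  have hkey : 0 < g T.circumcenter := circum_pos k T g htowerT hgpos hgz
  set C := T.circumcenter with hCdef
  set r := T.circumradius with hrdef
  have hrC : dist C (p 2) = r := by
    rw [dist_comm, ← hT0]
    exact T.dist_circumcenter_eq_circumradius 0
  have hA : r ^ 2 < dist C (p 1) ^ 2 := by
    have := hkey
    rw [hgdef, distSqSub_apply, hrC] at this
    linarith
  have hRi : ∀ i : Fin (k + 1), dist (T.points i) Qn = R := by
    intro i
    have := hR ((i : ℕ) + 1) (by omega)
    rw [show 1 + ((i : ℕ) + 1) = 2 + (i : ℕ) from by omega] at this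
    rw [hTpts, dist_comm]
    exact this
  have hprojQ : ↑(T.orthogonalProjectionSpan Qn) = C :=
    T.orthogonalProjection_eq_circumcenter_of_dist_eq hRi
  have hpyth : R ^ 2 = r ^ 2 + dist Qn C ^ 2 := by
    have hmem0 : T.points 0 ∈ affineSpan ℝ (Set.range T.points) :=
      mem_affineSpan ℝ (Set.mem_range_self _)
    have e0 := T.dist_sq_eq_dist_orthogonalProjection_sq_add_dist_orthogonalProjection_sq
      Qn hmem0
    rw [hRi 0] at e0
    have e2 : dist (T.points 0) ↑(T.orthogonalProjectionSpan Qn) = r := by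
      rw [hprojQ, ← hrC, hT0, dist_comm]
    have e3 : dist Qn ↑(T.orthogonalProjectionSpan Qn) = dist Qn C := by rw [hprojQ]
    rw [e2, e3] at e0
    nlinarith [e0]
  have hRr : r ^ 2 ≤ R ^ 2 := by nlinarith [hpyth, sq_nonneg (dist Qn C)]
  have hspan_eq : affineSpan ℝ (p '' Set.Icc 2 (k + 2)) = affineSpan ℝ (Set.range T.points) := by
    rw [hspanset]
  have hQnotin : Qn ∉ affineSpan ℝ (p '' Set.Icc 2 (k + 2)) := by
    intro hmem
    rw [hspan_eq] at hmem
    have hQC : Qn = C := T.eq_circumcenter_of_dist_eq hmem hRi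
    have h0 := hR 0 (by omega)
    rw [show (1 : ℕ) + 0 = 1 from rfl, hQC] at h0
    have h2 := hRi 0
    rw [hQC, hT0] at h2
    rw [dist_comm] at h2
    have h2' : r = R := hrC.symm.trans h2
    rw [h0] at hA
    rw [h2'] at hA
    linarith
  have part1 : ∀ x ∈ segment ℝ (p 1) Qn, x ∉ affineSpan ℝ (p '' Set.Icc 2 (k + 2)) := by
    intro x hx hxH
    rw [segment_eq_image_lineMap] at hx
    obtain ⟨t, ⟨ht0, ht1⟩, rfl⟩ := hx
    set f := distSqSub C Qn with hfdef
    -- f is constant on the affine span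
    have hfH : ∀ y ∈ affineSpan ℝ (p '' Set.Icc 2 (k + 2)), f y = r ^ 2 - R ^ 2 := by
      intro y hy
      have hle : affineSpan ℝ (p '' Set.Icc 2 (k + 2)) ≤
          AffineSubspace.comap f (affineSpan ℝ ({r ^ 2 - R ^ 2} : Set ℝ)) := by
        rw [hspanset]
        refine affineSpan_le.mpr ?_
        rintro y' ⟨i, rfl⟩
        rw [SetLike.mem_coe, AffineSubspace.mem_comap,
          AffineSubspace.mem_affineSpan_singleton]
        rw [hfdef, distSqSub_apply, hRi i]
        rw [show dist (T.points i) C = r from T.dist_circumcenter_eq_circumradius i]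
      have := hle hy
      rw [AffineSubspace.mem_comap,
        AffineSubspace.mem_affineSpan_singleton] at this
      exact this
    have hfx := hfH _ hxH
    have hfp1 : f (p 1) = dist (p 1) C ^ 2 - R ^ 2 := by
      rw [hfdef, distSqSub_apply]
      have := hR 0 (by omega)
      rw [show (1 : ℕ) + 0 = 1 from rfl] at this
      rw [dist_comm (p 1) Qn, this]
    have hfQ : f Qn = R ^ 2 - r ^ 2 := by
      rw [hfdef, distSqSub_apply]
      simp only [dist_self]
      have : dist Qn C ^ 2 = R ^ 2 - r ^ 2 := by linarith [hpyth]
      rw [this]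
      ring
    have hfline : f (AffineMap.lineMap (p 1) Qn t) = t * (f Qn - f (p 1)) + f (p 1) := by
      rw [AffineMap.apply_lineMap, AffineMap.lineMap_apply]
      simp [vsub_eq_sub, vadd_eq_add, smul_eq_mul]
    rw [hfline, hfp1, hfQ] at hfx
    have hA' : r ^ 2 < dist (p 1) C ^ 2 := by rwa [dist_comm] at hA
    have ht1' : t = 1 := by
      refine le_antisymm ht1 ?_
      nlinarith [hfx, hA', hRr, ht0, ht1]
    rw [ht1', AffineMap.lineMap_apply_one] at hxH
    exact hQnotin hxH
  refine ⟨part1, ?_, ?_⟩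
  · -- affine independence of p 2, ..., p (k+2), Qn
    set F : Fin (k + 2) → EuclideanSpace ℝ (Fin d) :=
      (fun i : Fin (k + 2) =>
        (fun i : ℕ => if i ≤ k + 2 - 1 then p (i + 1) else Qn) (1 + (i : ℕ))) with hFdef
    show AffineIndependent ℝ F
    have hFval : ∀ i : Fin (k + 2), (i : ℕ) ≤ k → F i = p (2 + (i : ℕ)) := by
      intro i hik
      rw [hFdef]
      simp only
      rw [if_pos (by omega), show 1 + (i : ℕ) + 1 = 2 + (i : ℕ) from by omega]
    have hFlast : F (Fin.last (k + 1)) = Qn := by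
      rw [hFdef]
      simp only [Fin.val_last]
      rw [if_neg (by omega)]
    refine AffineIndependent.affineIndependent_of_notMem_span
      (i := Fin.last (k + 1)) ?_ ?_
    · -- restriction to non-last indices
      set e : {y : Fin (k + 2) // y ≠ Fin.last (k + 1)} ↪ Fin (k + 1) :=
        ⟨fun x => ⟨(x.1 : ℕ), by
          have := Fin.val_lt_last x.2
          omega⟩, by
          intro a b hab
          apply Subtype.ext
          apply Fin.ext
          simpa [Fin.ext_iff] using hab⟩ with hedef
      have h1 := T.independent.comp_embedding e
      have h2 : (fun x : {y : Fin (k + 2) // y ≠ Fin.last (k + 1)} => F ↑x)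
          = (T.points ∘ e) := by
        funext x
        have hx : (x.1 : ℕ) ≤ k := by
          have := Fin.val_lt_last x.2
          omega
        rw [hFval x.1 hx]
        show p (2 + (x.1 : ℕ)) = T.points (e x)
        rw [hTpts]
        rfl
      rw [h2]
      exact h1
    · rw [hFlast]
      have himg : F '' {x | x ≠ Fin.last (k + 1)} = p '' Set.Icc 2 (k + 2) := by
        ext y
        constructor
        · rintro ⟨x, hx, rfl⟩
          have hxk : (x : ℕ) ≤ k := by
            have := Fin.val_lt_last hx
            omega
          rw [hFval x hxk]
          exact ⟨2 + (x : ℕ), ⟨by omega, by omega⟩, rfl⟩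
        · rintro ⟨m, ⟨h2, hk2⟩, rfl⟩
          refine ⟨⟨m - 2, by omega⟩, ?_, ?_⟩
          · show (⟨m - 2, by omega⟩ : Fin (k + 2)) ≠ Fin.last (k + 1)
            intro hc
            rw [Fin.ext_iff] at hc
            simp only [Fin.val_last] at hc
            omega
          · rw [hFval ⟨m - 2, by omega⟩ (by simp; omega)]
            show p (2 + (m - 2)) = p m
            rw [show 2 + (m - 2) = m from by omega]
      rw [himg]
      exact hQnotin
  · -- the distance conditions
    intro i j k' hik hji hki
    simp only
    have hj1 : 1 + j ≤ k + 2 - 1 := by omega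
    have hk1 : 1 + k' ≤ k + 2 - 1 := by omega
    rw [if_pos hj1, if_pos hk1]
    by_cases hi1 : i ≤ k
    · rw [if_pos (by omega : 1 + i ≤ k + 2 - 1)]
      have hd := hdist (i + 1) (j + 1) (k' + 1) (by omega) (by omega) (by omega)
      rw [show 1 + (j + 1) = 1 + j + 1 from by omega,
        show 1 + (k' + 1) = 1 + k' + 1 from by omega,
        show 1 + (i + 1) = 1 + i + 1 from by omega] at hd
      exact hd
    · rw [if_neg (by omega : ¬ (1 + i ≤ k + 2 - 1))]
      have e1 := hR (j + 1) (by omega)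
      have e2 := hR (k' + 1) (by omega)
      rw [show 1 + (j + 1) = 1 + j + 1 from by omega] at e1
      rw [show 1 + (k' + 1) = 1 + k' + 1 from by omega] at e2
      rw [dist_comm (p (1 + j + 1)) Qn, dist_comm (p (1 + k' + 1)) Qn, e1, e2]
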